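/- Let k ≥ 2 and ℓ be integers with 2(2k+1) < ℓ. Then for every integer z with 1 ≤ z ≤ ℓ−1 and gcd(z, ℓ) = 1, |1 − sin(2kzπ/ℓ)/sin(zπ/ℓ)| ≠ sin((2k+1)π/ℓ)/sin(π/ℓ). [This says that no specialization of the quantum dimension character of the type BC Turaev–Wenzl category equals the unique positive character on the generating object, which is the key step in proving that none of these categories is unitarizable.] -/

import Mathlib

open Real

set_option maxHeartbeats 1000000
set_option linter.unusedTactic false

private lemma sin_even_mul (n : ℕ) (x : ℝ) :
    Real.sin (2 * n * x) = 2 * Real.sin x * ∑ j ∈ Finset.range n, Real.cos ((2 * j + 1) * x) := by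
  induction n with
  | zero => simp
  | succ n ih =>
    rw [Finset.sum_range_succ]
    have key : Real.sin (2 * (n + 1 : ℕ) * x) =
        Real.sin (2 * n * x) + 2 * Real.cos ((2 * n + 1) * x) * Real.sin x := by
      have h1 : (2 * ((n : ℝ) + 1) * x) = (2 * n + 1) * x + x := by ring
      have h2 : (2 * (n : ℝ) * x) = (2 * n + 1) * x - x := by ring
      push_cast
      rw [h1, h2, Real.sin_add, Real.sin_sub]
      ring
    rw [key, ih]
    push_cast
    ring

private lemma sin_odd_mul (n : ℕ) (x : ℝ) :
    Real.sin ((2 * n + 1) * x) =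
      Real.sin x + 2 * Real.sin x * ∑ j ∈ Finset.range n, Real.cos ((2 * j + 2) * x) := by
  induction n with
  | zero => simp
  | succ n ih =>
    rw [Finset.sum_range_succ]
    have key : Real.sin ((2 * (n + 1 : ℕ) + 1) * x) =
        Real.sin ((2 * n + 1) * x) + 2 * Real.cos ((2 * n + 2) * x) * Real.sin x := by
      have h1 : ((2 * ((n : ℝ) + 1) + 1) * x) = (2 * n + 2) * x + x := by ring
      have h2 : ((2 * (n : ℝ) + 1) * x) = (2 * n + 2) * x - x := by ring
      push_cast
      rw [h1, h2, Real.sin_add, Real.sin_sub]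
      ring
    rw [key, ih]
    push_cast
    ring

private lemma master_half (k ℓ w : ℕ) (hk : 2 ≤ k) (hℓ : 2 * (2 * k + 1) < ℓ)
    (hw2 : 2 ≤ w) (hw : 2 * w ≤ ℓ) :
    |Real.sin (2 * k * w * (Real.pi / ℓ))| * Real.sin (Real.pi / ℓ) <
      (Real.sin ((2 * k + 1) * (Real.pi / ℓ)) - Real.sin (Real.pi / ℓ)) *
        Real.sin (w * (Real.pi / ℓ)) := by
  have hl0 : 0 < ℓ := by omega
  have hl0' : (0:ℝ) < ℓ := by exact_mod_cast hl0
  set t : ℝ := Real.pi / ℓ with ht_def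
  have ht : 0 < t := div_pos Real.pi_pos hl0'
  have hlt : (ℓ:ℝ) * t = Real.pi := by rw [ht_def]; field_simp
  have hw2' : (2:ℝ) ≤ (w:ℝ) := by exact_mod_cast hw2
  have hw' : 2 * (w:ℝ) ≤ (ℓ:ℝ) := by exact_mod_cast hw
  have hwt_pos : 0 < (w:ℝ) * t := by positivity
  have hwt_le : (w:ℝ) * t ≤ Real.pi / 2 := by
    rw [← hlt]; nlinarith
  have hst : 0 < Real.sin t := by
    apply Real.sin_pos_of_pos_of_lt_pi ht
    rw [← hlt]
    nlinarith
  have hswt : 0 < Real.sin ((w:ℝ) * t) := by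
    apply Real.sin_pos_of_pos_of_lt_pi hwt_pos
    calc (w:ℝ) * t ≤ Real.pi / 2 := hwt_le
    _ < Real.pi := by linarith [Real.pi_pos]
  have hk' : (2:ℝ) ≤ (k:ℝ) := by exact_mod_cast hk
  rcases le_or_gt (2 * k * w) ℓ with hA | hB
  · -- Case A : 2kw ≤ ℓ
    have hA' : 2 * (k:ℝ) * w ≤ (ℓ:ℝ) := by exact_mod_cast hA
    have habs : |Real.sin (2 * (k:ℝ) * w * t)| = Real.sin (2 * (k:ℝ) * w * t) := by
      apply abs_of_nonneg
      apply Real.sin_nonneg_of_nonneg_of_le_pi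
      · positivity
      · rw [← hlt]; nlinarith
    rw [habs]
    have harg : 2 * (k:ℝ) * w * t = 2 * (k:ℝ) * ((w:ℝ) * t) := by ring
    have hid1 := sin_even_mul k ((w:ℝ) * t)
    have hid2 := sin_odd_mul k t
    rw [harg, hid1]
    have hsum : (∑ j ∈ Finset.range k, Real.cos ((2 * (j:ℝ) + 1) * ((w:ℝ) * t))) <
        ∑ j ∈ Finset.range k, Real.cos ((2 * (j:ℝ) + 2) * t) := by
      apply Finset.sum_lt_sum
      · intro j hj
        have hjk : (j:ℝ) ≤ (k:ℝ) - 1 := by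
          have : j ≤ k - 1 := by
            have := Finset.mem_range.mp hj; omega
          have hj' : (j:ℝ) ≤ ((k-1 : ℕ):ℝ) := by exact_mod_cast this
          rw [Nat.cast_sub (by omega)] at hj'
          simpa using hj'
        apply Real.cos_le_cos_of_nonneg_of_le_pi
        · positivity
        · -- (2j+1) * (w t) ≤ π
          rw [← hlt]
          have h1 : (2 * (j:ℝ) + 1) * (w:ℝ) ≤ 2 * (k:ℝ) * w := by nlinarith
          nlinarith
        · -- (2j+2) t ≤ (2j+1)(w t)
          have : (2 * (j:ℝ) + 2) ≤ (2 * (j:ℝ) + 1) * w := by nlinarith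
          nlinarith
      · refine ⟨1, Finset.mem_range.mpr (by omega), ?_⟩
        push_cast
        apply Real.cos_lt_cos_of_nonneg_of_le_pi
        · positivity
        · rw [← hlt]
          have h1 : (2 * (1:ℝ) + 1) * (w:ℝ) ≤ 2 * (k:ℝ) * w := by nlinarith [hk', hw2']
          nlinarith
        · nlinarith
    have hfac : 0 < 2 * Real.sin ((w:ℝ) * t) * Real.sin t := by positivity
    have := mul_lt_mul_of_pos_left hsum hfac
    calc 2 * Real.sin ((w:ℝ)*t) * (∑ j ∈ Finset.range k, Real.cos ((2*(j:ℝ)+1) * ((w:ℝ)*t))) * Real.sin t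
        = 2 * Real.sin ((w:ℝ)*t) * Real.sin t * (∑ j ∈ Finset.range k, Real.cos ((2*(j:ℝ)+1) * ((w:ℝ)*t))) := by ring
      _ < 2 * Real.sin ((w:ℝ)*t) * Real.sin t * (∑ j ∈ Finset.range k, Real.cos ((2*(j:ℝ)+2) * t)) := this
      _ = (Real.sin ((2 * (k:ℝ) + 1) * t) - Real.sin t) * Real.sin ((w:ℝ) * t) := by
          rw [hid2]; ring
  · -- Case B : ℓ < 2kw
    have hB' : (ℓ:ℝ) < 2 * (k:ℝ) * w := by exact_mod_cast hB
    have hπ : 0 < Real.pi := Real.pi_pos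
    -- sin(wt) ≥ sin(π/(2k)) ≥ 1/k
    have hlow : Real.pi / (2 * k) ≤ (w:ℝ) * t := by
      rw [div_le_iff₀ (by positivity), ← hlt]
      nlinarith [mul_le_mul_of_nonneg_right hB'.le ht.le]
    have hmono : Real.sin (Real.pi / (2 * k)) ≤ Real.sin ((w:ℝ) * t) := by
      apply Real.strictMonoOn_sin.monotoneOn
      · constructor
        · linarith [div_nonneg Real.pi_pos.le (by positivity : (0:ℝ) ≤ 2 * (k:ℝ))]
        · rw [div_le_div_iff₀ (by positivity) two_pos]; nlinarith
      · exact ⟨by linarith, hwt_le⟩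
      · exact hlow
    have hjordan1 : 2 / Real.pi * (Real.pi / (2 * k)) ≤ Real.sin (Real.pi / (2 * k)) := by
      apply Real.mul_le_sin
      · positivity
      · rw [div_le_div_iff₀ (by positivity) two_pos]; nlinarith
    have hval : 2 / Real.pi * (Real.pi / (2 * k)) = 1 / (k:ℝ) := by
      field_simp
    have hsinw : 1 / (k:ℝ) ≤ Real.sin ((w:ℝ) * t) := by
      rw [← hval]; linarith
    have h2k1t : (2 * (k:ℝ) + 1) * t ≤ Real.pi / 2 := by
      rw [← hlt]
      have : 2 * (2 * (k:ℝ) + 1) ≤ (ℓ:ℝ) := by exact_mod_cast hℓ.le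
      nlinarith
    have hjordan2 : 2 / Real.pi * ((2 * (k:ℝ) + 1) * t) ≤ Real.sin ((2 * (k:ℝ) + 1) * t) := by
      apply Real.mul_le_sin (by positivity) h2k1t
    have hS' : 2 * ((2 * (k:ℝ) + 1) * t) ≤ Real.sin ((2 * (k:ℝ) + 1) * t) * Real.pi := by
      rw [div_mul_eq_mul_div, div_le_iff₀ hπ] at hjordan2
      linarith
    have hst_le : Real.sin t ≤ t := Real.sin_le ht.le
    have habs1 : |Real.sin (2 * (k:ℝ) * w * t)| ≤ 1 := Real.abs_sin_le_one _
    have hπ315 : Real.pi < 3.15 := Real.pi_lt_d2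
    -- S - sin t > 0 and (S - sin t) * sin(wt) > t ≥ sin t
    set S := Real.sin ((2 * (k:ℝ) + 1) * t) with hS_def
    have hSpos : Real.pi * (S - Real.sin t) ≥ (4 * (k:ℝ) + 2 - Real.pi) * t := by
      nlinarith
    have hkey : Real.sin t < (S - Real.sin t) * Real.sin ((w:ℝ) * t) := by
      have hSst : 0 < S - Real.sin t := by nlinarith
      have h1 : (S - Real.sin t) * Real.sin ((w:ℝ) * t) ≥ (S - Real.sin t) * (1 / k) := by
        apply mul_le_mul_of_nonneg_left hsinw hSst.le
      have h2 : (S - Real.sin t) * (1/(k:ℝ)) > t := by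
        rw [gt_iff_lt, ← sub_pos]
        have hkpos : (0:ℝ) < k := by linarith
        have : (S - Real.sin t) * (1/(k:ℝ)) - t = ((S - Real.sin t) * Real.pi - Real.pi * k * t) / (Real.pi * k) := by
          field_simp
        rw [this]
        apply div_pos _ (by positivity)
        have hc : 4*(k:ℝ)+2-Real.pi-Real.pi*k ≥ 10 - 3*Real.pi := by nlinarith [hk', hπ315]
        nlinarith [mul_le_mul_of_nonneg_right hc ht.le, hSpos, hπ315, ht]
      linarith
    calc |Real.sin (2 * (k:ℝ) * w * t)| * Real.sin t ≤ 1 * Real.sin t := by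
          apply mul_le_mul_of_nonneg_right habs1 hst.le
      _ = Real.sin t := one_mul _
      _ < (S - Real.sin t) * Real.sin ((w:ℝ) * t) := hkey

private lemma reflect_sin (ℓ z : ℕ) (hz : z ≤ ℓ) (hl0 : 0 < ℓ) :
    Real.sin (((ℓ - z : ℕ) : ℝ) * (Real.pi / ℓ)) = Real.sin ((z:ℝ) * (Real.pi / ℓ)) := by
  have hl0' : (0:ℝ) < ℓ := by exact_mod_cast hl0
  have h1 : (((ℓ - z : ℕ)) : ℝ) = (ℓ:ℝ) - z := by
    rw [Nat.cast_sub hz]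
  rw [h1]
  have h2 : ((ℓ:ℝ) - z) * (Real.pi / ℓ) = Real.pi - (z:ℝ) * (Real.pi / ℓ) := by
    field_simp
  rw [h2, Real.sin_pi_sub]

private lemma reflect_sin2 (k ℓ z : ℕ) (hz : z ≤ ℓ) (hl0 : 0 < ℓ) :
    Real.sin (2 * (k:ℝ) * ((ℓ - z : ℕ) : ℝ) * (Real.pi / ℓ)) =
      - Real.sin (2 * (k:ℝ) * (z:ℝ) * (Real.pi / ℓ)) := by
  have hl0' : (0:ℝ) < ℓ := by exact_mod_cast hl0
  have h1 : (((ℓ - z : ℕ)) : ℝ) = (ℓ:ℝ) - z := by rw [Nat.cast_sub hz]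
  have h2 : 2 * (k:ℝ) * ((ℓ:ℝ) - z) * (Real.pi / ℓ) =
      -(2 * (k:ℝ) * (z:ℝ) * (Real.pi / ℓ)) + (k:ℕ) * (2 * Real.pi) := by
    field_simp; ring
  rw [h1, h2, Real.sin_add_nat_mul_two_pi, Real.sin_neg]

private lemma master_full (k ℓ z : ℕ) (hk : 2 ≤ k) (hℓ : 2 * (2 * k + 1) < ℓ)
    (hz2 : 2 ≤ z) (hz : z ≤ ℓ - 2) :
    |Real.sin (2 * k * z * (Real.pi / ℓ))| * Real.sin (Real.pi / ℓ) <
      (Real.sin ((2 * k + 1) * (Real.pi / ℓ)) - Real.sin (Real.pi / ℓ)) *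
        Real.sin (z * (Real.pi / ℓ)) := by
  rcases le_or_gt (2 * z) ℓ with h | h
  · exact master_half k ℓ z hk hℓ hz2 h
  · have hzl : z ≤ ℓ := by omega
    have hl0 : 0 < ℓ := by omega
    have h1 := reflect_sin ℓ z hzl hl0
    have h2 := reflect_sin2 k ℓ z hzl hl0
    have := master_half k ℓ (ℓ - z) hk hℓ (by omega) (by omega)
    rw [h2] at this
    push_cast at this ⊢
    rw [abs_neg] at this
    rw [← h1]
    push_cast
    exact this

/-- For integers `k ≥ 2` and `ℓ` with `2(2k+1) < ℓ`, and every integer `z` with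
`1 ≤ z ≤ ℓ - 1` and `gcd(z, ℓ) = 1`, the absolute value of the quantum-dimension
character `h(z) = 1 - sin(2kzπ/ℓ)/sin(zπ/ℓ)` on the generating object differs from the
value `Dim(□) = sin((2k+1)π/ℓ)/sin(π/ℓ)` of the unique positive character. -/
theorem typeBC_dim_ne_positive_character (k ℓ : ℕ) (hk : 2 ≤ k)
    (hℓ : 2 * (2 * k + 1) < ℓ) (z : ℕ) (hz1 : 1 ≤ z) (hz2 : z ≤ ℓ - 1)
    (hgcd : Nat.gcd z ℓ = 1) :
    |1 - Real.sin (2 * k * z * Real.pi / ℓ) / Real.sin (z * Real.pi / ℓ)| ≠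
      Real.sin ((2 * k + 1) * Real.pi / ℓ) / Real.sin (Real.pi / ℓ) := by
  have hl0 : 0 < ℓ := by omega
  have hl0' : (0:ℝ) < ℓ := by exact_mod_cast hl0
  set t : ℝ := Real.pi / ℓ with ht_def
  have ht : 0 < t := div_pos Real.pi_pos hl0'
  have hlt : (ℓ:ℝ) * t = Real.pi := by rw [ht_def]; field_simp
  have hk' : (2:ℝ) ≤ (k:ℝ) := by exact_mod_cast hk
  have hℓ' : 2 * (2 * (k:ℝ) + 1) < (ℓ:ℝ) := by exact_mod_cast hℓ
  have hst : 0 < Real.sin t := by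
    apply Real.sin_pos_of_pos_of_lt_pi ht
    rw [← hlt]; nlinarith
  -- rewrite the angles
  have e1 : 2 * (k:ℝ) * z * Real.pi / ℓ = 2 * (k:ℝ) * z * t := by
    rw [ht_def]; ring
  have e2 : (z:ℝ) * Real.pi / ℓ = (z:ℝ) * t := by rw [ht_def]; ring
  have e3 : (2 * (k:ℝ) + 1) * Real.pi / ℓ = (2 * (k:ℝ) + 1) * t := by rw [ht_def]; ring
  rw [e1, e2, e3]
  have h2kt : 0 < Real.sin (2 * (k:ℝ) * t) := by
    apply Real.sin_pos_of_pos_of_lt_pi (by positivity)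
    rw [← hlt]; nlinarith
  have h2kt_lt : Real.sin (2 * (k:ℝ) * t) < Real.sin ((2 * (k:ℝ) + 1) * t) := by
    apply Real.strictMonoOn_sin
    · constructor
      · nlinarith [Real.pi_pos]
      · rw [← hlt]; nlinarith
    · constructor
      · nlinarith [Real.pi_pos]
      · rw [← hlt]; nlinarith
    · nlinarith
  have hzt_pos : 0 < Real.sin ((z:ℝ) * t) := by
    apply Real.sin_pos_of_pos_of_lt_pi
    · have h1 : (1:ℝ) ≤ (z:ℝ) := by exact_mod_cast hz1
      nlinarith
    · rw [← hlt]
      have h1 : (z:ℝ) < (ℓ:ℝ) := by exact_mod_cast (by omega : z < ℓ)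
      nlinarith
  rcases eq_or_lt_of_le hz2 with hztop | hzmid
  · -- z = ℓ - 1 : |h| > D
    have hzval : z = ℓ - 1 := hztop
    subst hzval
    have hrefl1 : Real.sin (((ℓ-1:ℕ):ℝ) * t) = Real.sin t := by
      have h := reflect_sin ℓ 1 (by omega) hl0
      rw [← ht_def] at h
      simpa using h
    have hrefl2 : Real.sin (2 * (k:ℝ) * ((ℓ-1:ℕ):ℝ) * t) = - Real.sin (2 * (k:ℝ) * t) := by
      have h := reflect_sin2 k ℓ 1 (by omega) hl0
      rw [← ht_def] at h
      simpa using h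
    rw [hrefl1, hrefl2]
    have hexp : 1 - -Real.sin (2 * (k:ℝ) * t) / Real.sin t
        = 1 + Real.sin (2 * (k:ℝ) * t) / Real.sin t := by ring
    rw [hexp]
    have hpos : 0 < 1 + Real.sin (2 * (k:ℝ) * t) / Real.sin t := by positivity
    rw [abs_of_pos hpos]
    apply ne_of_gt
    rw [div_lt_iff₀ hst]
    have hexp2 : (1 + Real.sin (2 * (k:ℝ) * t) / Real.sin t) * Real.sin t
        = Real.sin t + Real.sin (2 * (k:ℝ) * t) := by field_simp
    rw [hexp2]
    have hS : Real.sin ((2 * (k:ℝ) + 1) * t) =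
        Real.sin (2 * (k:ℝ) * t) * Real.cos t + Real.cos (2 * (k:ℝ) * t) * Real.sin t := by
      rw [← Real.sin_add]; ring_nf
    have hct : Real.cos t < 1 := by
      have h := Real.cos_lt_cos_of_nonneg_of_le_pi (le_refl 0)
        (by rw [← hlt]; nlinarith : t ≤ Real.pi) ht
      rwa [Real.cos_zero] at h
    have hc2kt : Real.cos (2 * (k:ℝ) * t) ≤ 1 := Real.cos_le_one _
    rw [hS]
    nlinarith
  rcases eq_or_lt_of_le hz1 with hz1' | hz1''
  · -- z = 1 : |h| < D
    subst hz1'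
    have e4 : 2 * (k:ℝ) * ((1:ℕ):ℝ) * t = 2 * (k:ℝ) * t := by push_cast; ring
    have e5 : ((1:ℕ):ℝ) * t = t := by push_cast; ring
    rw [e4, e5]
    have hslt : Real.sin t < Real.sin (2 * (k:ℝ) * t) := by
      apply Real.strictMonoOn_sin
      · constructor
        · nlinarith [Real.pi_pos]
        · rw [← hlt]; nlinarith
      · constructor
        · nlinarith [Real.pi_pos]
        · rw [← hlt]; nlinarith
      · nlinarith
    have hneg : 1 - Real.sin (2 * (k:ℝ) * t) / Real.sin t < 0 := by
      have := (one_lt_div hst).mpr hslt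
      linarith
    apply ne_of_lt
    rw [abs_of_neg hneg, neg_sub]
    have hq : Real.sin (2 * (k:ℝ) * t) / Real.sin t
        < Real.sin ((2 * (k:ℝ) + 1) * t) / Real.sin t :=
      div_lt_div_of_pos_right h2kt_lt hst
    linarith
  · -- 2 ≤ z ≤ ℓ - 2 : |h| < D
    have hz2' : 2 ≤ z := hz1''
    have hzle : z ≤ ℓ - 2 := by omega
    have hM := master_full k ℓ z hk hℓ hz2' hzle
    rw [← ht_def] at hM
    have hexp : 1 - Real.sin (2 * (k:ℝ) * z * t) / Real.sin ((z:ℝ) * t)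
        = (Real.sin ((z:ℝ) * t) - Real.sin (2 * (k:ℝ) * z * t)) / Real.sin ((z:ℝ) * t) := by
      field_simp
    apply ne_of_lt
    rw [hexp, abs_div, abs_of_pos hzt_pos, div_lt_div_iff₀ hzt_pos hst]
    have habs : |Real.sin ((z:ℝ) * t) - Real.sin (2 * (k:ℝ) * z * t)|
        ≤ Real.sin ((z:ℝ) * t) + |Real.sin (2 * (k:ℝ) * z * t)| := by
      calc |Real.sin ((z:ℝ) * t) - Real.sin (2 * (k:ℝ) * z * t)|
          ≤ |Real.sin ((z:ℝ) * t)| + |Real.sin (2 * (k:ℝ) * z * t)| := abs_sub _ _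
        _ = Real.sin ((z:ℝ) * t) + |Real.sin (2 * (k:ℝ) * z * t)| := by
            rw [abs_of_pos hzt_pos]
    nlinarith [mul_le_mul_of_nonneg_right habs hst.le, hM, hzt_pos, hst]
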